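/- Let 0 < β < α, let δ ∈ (0, α), and let w ∈ H with Im w ∈ [β, α]. Then there exists η > 0 (depending only on α, β, δ) such that for every g ∈ SL(2,ℝ) with Im(g·w) ∈ [β, α], the Euclidean ball B_η(g·w) is contained in g·B_δ(w), where B_r(z) denotes the open Euclidean disk of radius r centered at z intersected with H. -/

import Mathlib

set_option maxHeartbeats 1000000

lemma mob_im (a b c d : ℝ) (h : a*d - b*c = 1) (w : ℂ) :
    (((a:ℂ)*w+b)/((c:ℂ)*w+d)).im = w.im / Complex.normSq ((c:ℂ)*w+d) := by
  rw [Complex.div_im, div_sub_div_same]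
  congr 1
  simp only [Complex.add_re, Complex.add_im, Complex.mul_re, Complex.mul_im,
    Complex.ofReal_re, Complex.ofReal_im]
  ring_nf
  linear_combination w.im * h

/-- For `0 < β < α`, `δ ∈ (0,α)` there exists `η > 0` (depending only on `α, β, δ`)
such that for every `w ∈ H` with `Im w ∈ [β,α]` and every `g ∈ SL(2,ℝ)` with
`Im(g·w) ∈ [β,α]` one has `B_η(g·w) ⊆ g·B_δ(w)`. -/
theorem stmt_9 (α β δ : ℝ) (hβ : 0 < β) (hβα : β < α) (hδ0 : 0 < δ) (hδα : δ < α) :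
    ∃ η > 0, ∀ w : ℂ, β ≤ w.im → w.im ≤ α →
      ∀ a b c d : ℝ, a * d - b * c = 1 →
        β ≤ (((a : ℂ) * w + b) / ((c : ℂ) * w + d)).im →
        (((a : ℂ) * w + b) / ((c : ℂ) * w + d)).im ≤ α →
        Metric.ball (((a : ℂ) * w + b) / ((c : ℂ) * w + d)) η ⊆
          (fun u : ℂ => ((a : ℂ) * u + b) / ((c : ℂ) * u + d)) '' Metric.ball w δ := by
  have hα : 0 < α := hβ.trans hβα
  set s := Real.sqrt (β/α) with hs_def
  set M := Real.sqrt (α/β^3) with hM_def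
  have hs0 : 0 < s := Real.sqrt_pos.mpr (by positivity)
  have hM0 : 0 < M := Real.sqrt_pos.mpr (by positivity)
  have hs2 : s^2 = β/α := Real.sq_sqrt (by positivity)
  have hM2' : M^2 * β^3 = α := by
    rw [Real.sq_sqrt (by positivity : (0:ℝ) ≤ α/β^3)]
    field_simp
  clear_value s M
  refine ⟨min (s/(2*M)) (δ*β/(2*α)), by positivity, ?_⟩
  intro w hw1 hw2 a b c d hdet hz1 hz2 z hz
  set η := min (s/(2*M)) (δ*β/(2*α)) with hη_def
  have hη1 : η ≤ s/(2*M) := min_le_left _ _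
  have hη2 : η ≤ δ*β/(2*α) := min_le_right _ _
  have hη0 : 0 < η := lt_min (by positivity) (by positivity)
  clear_value η
  have hdetC : (a:ℂ)*d - b*c = 1 := by exact_mod_cast hdet
  have hwim : 0 < w.im := hβ.trans_le hw1
  set K : ℂ := (c:ℂ)*w + d with hK_def
  set z₀ : ℂ := ((a:ℂ)*w + b)/K with hz0_def
  have him0 : z₀.im = w.im / Complex.normSq K := mob_im a b c d hdet w
  clear_value K z₀
  have hz0im : 0 < z₀.im := hβ.trans_le hz1
  have hK : K ≠ 0 := by
    intro h0
    rw [h0, Complex.normSq_zero, div_zero] at him0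
    exact absurd him0 (ne_of_gt hz0im)
  have hNpos : 0 < Complex.normSq K := Complex.normSq_pos.mpr hK
  have hNval : Complex.normSq K = w.im / z₀.im := by
    rw [him0]
    field_simp
  have hNle : Complex.normSq K ≤ α/β :=
    hNval ▸ div_le_div₀ hα.le hw2 hβ hz1
  have hNle' : Complex.normSq K * β ≤ α := (le_div_iff₀ hβ).mp hNle
  -- bound on |c|
  have hcsq : c^2 * β^2 ≤ Complex.normSq K := by
    have h1 : Complex.normSq K = (c*w.re+d)^2 + (c*w.im)^2 := by
      rw [hK_def, Complex.normSq_apply]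
      simp only [Complex.add_re, Complex.add_im, Complex.mul_re, Complex.mul_im,
        Complex.ofReal_re, Complex.ofReal_im]
      ring
    nlinarith [sq_nonneg (c*w.re+d), sq_nonneg c, mul_self_le_mul_self hβ.le hw1]
  have hc2 : c^2 ≤ M^2 := by
    nlinarith [mul_pos (mul_pos hβ hβ) hβ]
  have hcM : |c| ≤ M := by
    rw [← Real.sqrt_sq_eq_abs]
    calc Real.sqrt (c^2) ≤ Real.sqrt (M^2) := Real.sqrt_le_sqrt hc2
      _ = M := Real.sqrt_sq hM0.le
  -- bound on |K|
  have hkv0 : 0 < ‖K‖ := norm_pos_iff.mpr hK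
  have hkvsq : (‖K‖)^2 = Complex.normSq K := Complex.sq_norm K
  have hskv : s * ‖K‖ ≤ 1 := by
    have h2 : (s * ‖K‖)^2 ≤ 1 := by
      rw [mul_pow, hs2, hkvsq]
      calc β/α * Complex.normSq K = Complex.normSq K * β/α := by ring
        _ ≤ 1 := by rw [div_le_one hα]; exact hNle'
    have h3 : s * ‖K‖ = Real.sqrt ((s * ‖K‖)^2) :=
      (Real.sqrt_sq (by positivity)).symm
    rw [h3]
    calc Real.sqrt ((s * ‖K‖)^2) ≤ Real.sqrt 1 := Real.sqrt_le_sqrt h2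
      _ = 1 := Real.sqrt_one
  have hkvinv : s ≤ (‖K‖)⁻¹ := by
    have h1 := mul_le_mul_of_nonneg_right hskv (inv_nonneg.mpr hkv0.le)
    rwa [one_mul, mul_assoc, mul_inv_cancel₀ hkv0.ne', mul_one] at h1
  -- inverse relation
  have hz0K : z₀ * K = (a:ℂ)*w + b := by
    rw [hz0_def]; field_simp
  have hinv : -(c:ℂ)*z₀ + a = K⁻¹ := by
    apply eq_inv_of_mul_eq_one_left
    linear_combination -(c:ℂ)*hz0K + (a:ℂ)*hK_def + hdetC
  rw [Metric.mem_ball, Complex.dist_eq] at hz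
  have hrn : 0 ≤ ‖z - z₀‖ := norm_nonneg _
  set L : ℂ := -(c:ℂ)*z + a with hL_def
  clear_value L
  have hczbound : ‖(c:ℂ)*(z - z₀)‖ < s/2 := by
    rw [norm_mul, Complex.norm_real, Real.norm_eq_abs]
    have hMη : M * η ≤ s/2 := by
      have h1 := (le_div_iff₀ (by positivity : (0:ℝ) < 2*M)).mp hη1
      nlinarith
    calc |c| * ‖z - z₀‖ ≤ M * ‖z - z₀‖ :=
          mul_le_mul_of_nonneg_right hcM hrn
      _ < M * η := by exact mul_lt_mul_of_pos_left hz hM0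
      _ ≤ s/2 := hMη
  have hLlow : s/2 ≤ ‖L‖ := by
    have h1 : K⁻¹ = L + (c:ℂ)*(z - z₀) := by rw [← hinv, hL_def]; ring
    have h2 : ‖K⁻¹‖ ≤ ‖L‖ + ‖(c:ℂ)*(z-z₀)‖ := by
      rw [h1]; exact norm_add_le _ _
    rw [norm_inv] at h2
    linarith
  have hLpos : 0 < ‖L‖ := lt_of_lt_of_le (by positivity) hLlow
  have hL : L ≠ 0 := by
    intro h0; rw [h0, norm_zero] at hLpos; exact lt_irrefl 0 hLpos
  set u : ℂ := ((d:ℂ)*z - b)/L with hu_def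
  clear_value u
  refine ⟨u, ?_, ?_⟩
  · rw [Metric.mem_ball, Complex.dist_eq]
    have huL : u * L = (d:ℂ)*z - b := by rw [hu_def]; field_simp
    have hdiff : u - w = (z - z₀) * K / L := by
      rw [eq_div_iff hL]
      linear_combination huL + hz0K - w * hL_def - z * hK_def
    rw [hdiff, norm_div, norm_mul, div_lt_iff₀ hLpos]
    have hηδ : 2 * η ≤ δ * s^2 := by
      have h7 : η * (2*α) ≤ δ*β := (le_div_iff₀ (by positivity : (0:ℝ) < 2*α)).mp hη2
      rw [hs2, show δ*(β/α) = δ*β/α by ring, le_div_iff₀ hα]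
      nlinarith
    have key : s * (‖z - z₀‖ * ‖K‖) < s * (δ * ‖L‖) := by
      calc s * (‖z - z₀‖ * ‖K‖)
          = ‖z - z₀‖ * (s * ‖K‖) := by ring
        _ ≤ ‖z - z₀‖ := mul_le_of_le_one_right hrn hskv
        _ < η := hz
        _ ≤ δ * s^2 / 2 := by linarith
        _ = s * (δ * (s/2)) := by ring
        _ ≤ s * (δ * ‖L‖) := by
            apply mul_le_mul_of_nonneg_left _ hs0.le
            exact mul_le_mul_of_nonneg_left hLlow hδ0.le
    exact lt_of_mul_lt_mul_left key hs0.le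
  · show ((a:ℂ)*u + b)/((c:ℂ)*u + d) = z
    have huL : u * L = (d:ℂ)*z - b := by rw [hu_def]; field_simp
    have hcud : ((c:ℂ)*u + d) * L = 1 := by
      linear_combination (c:ℂ)*huL + (d:ℂ)*hL_def + hdetC
    have hcud0 : ((c:ℂ)*u + d) ≠ 0 := left_ne_zero_of_mul_eq_one hcud
    rw [div_eq_iff hcud0]
    have h6 : ((a:ℂ)*u + b)*L = (z*((c:ℂ)*u + d))*L := by
      linear_combination (a:ℂ)*huL + (b:ℂ)*hL_def - z*(c:ℂ)*huL - z*(d:ℂ)*hL_def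
    exact mul_right_cancel₀ hL h6
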